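/- Suppose θ > -∞ and for some product j ∈ J_f there exist r ∈ (0,1), κ ∈ ℝ, and p̄ ≥ 0 such that w_j(p) ≥ -r log p + κ for all p > p̄. Then firm f's profit π̂_f(p) tends to +∞ along any sequence of prices in which p_j → ∞ and the remaining prices converge in [0,∞]. -/

import Mathlib

open Filter Set

theorem stmt_4 {J : ℕ} (w : Fin J → ℝ → ℝ) (v : Fin J → ℝ) (θ : ℝ)
    (c : Fin J → ℝ) (Jf : Finset (Fin J)) (j : Fin J) (hj : j ∈ Jf)
    (hcont : ∀ k, ContinuousOn (w k) (Set.Ici (0:ℝ)))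
    (hanti : ∀ k, StrictAntiOn (w k) (Set.Ici (0:ℝ)))
    (r κ pbar : ℝ) (hr0 : 0 < r) (hr1 : r < 1) (hpbar : 0 ≤ pbar)
    (hbound : ∀ p > pbar, w j p ≥ -r * Real.log p + κ) :
    let P : (Fin J → ℝ) → Fin J → ℝ := fun p i =>
      Real.exp (w i (p i) + v i) / (Real.exp θ + ∑ k, Real.exp (w k (p k) + v k))
    ∀ pseq : ℕ → Fin J → ℝ, (∀ n k, 0 ≤ pseq n k) →
      Tendsto (fun n => pseq n j) atTop atTop →
      (∀ k, k ≠ j →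
        (∃ L : ℝ, Tendsto (fun n => pseq n k) atTop (nhds L)) ∨
          Tendsto (fun n => pseq n k) atTop atTop) →
      Tendsto (fun n => ∑ i ∈ Jf, P (pseq n) i * (pseq n i - c i)) atTop atTop := by
  intro P pseq hpos hjtop hother
  set D : ℝ := Real.exp θ + ∑ k, Real.exp (w k 0 + v k) with hD
  have hDpos : 0 < D := by positivity
  have hwle : ∀ n k, w k (pseq n k) ≤ w k 0 := by
    intro n k
    rcases eq_or_lt_of_le (hpos n k) with h | h
    · rw [← h]
    · exact le_of_lt ((hanti k) (Set.mem_Ici.mpr (le_refl 0)) (Set.mem_Ici.mpr (le_of_lt h)) h)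
  have hden : ∀ n, Real.exp θ + ∑ k, Real.exp (w k (pseq n k) + v k) ≤ D := by
    intro n
    rw [hD]
    gcongr with k
    exact hwle n k
  have hdenpos : ∀ n, 0 < Real.exp θ + ∑ k, Real.exp (w k (pseq n k) + v k) := by
    intro n; positivity
  have hP0 : ∀ n i, 0 ≤ P (pseq n) i := by
    intro n i
    exact div_nonneg (Real.exp_nonneg _) (le_of_lt (hdenpos n))
  have hP1 : ∀ n i, P (pseq n) i ≤ 1 := by
    intro n i
    rw [div_le_one (hdenpos n)]
    have h1 : Real.exp (w i (pseq n i) + v i) ≤ ∑ k, Real.exp (w k (pseq n k) + v k) :=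
      Finset.single_le_sum (f := fun k => Real.exp (w k (pseq n k) + v k))
        (fun k _ => Real.exp_nonneg _) (Finset.mem_univ i)
    have := Real.exp_pos θ
    linarith
  have hPj : ∀ n, Real.exp (w j (pseq n j) + v j) / D ≤ P (pseq n) j := by
    intro n
    exact div_le_div_of_nonneg_left (Real.exp_nonneg _) (hdenpos n) (hden n)
  -- main term tends to atTop
  have key : Tendsto (fun n => P (pseq n) j * (pseq n j - c j)) atTop atTop := by
    set A : ℝ := Real.exp (κ + v j) / D with hA
    have hApos : 0 < A := by positivity
    have hlb : Tendsto (fun n => A * ((pseq n j) ^ (1 - r) - c j * (pseq n j) ^ (-r)))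
        atTop atTop := by
      have h1 : Tendsto (fun n => (pseq n j) ^ (1 - r)) atTop atTop :=
        (tendsto_rpow_atTop (by linarith)).comp hjtop
      have h2 : Tendsto (fun n => c j * (pseq n j) ^ (-r)) atTop (nhds (c j * 0)) :=
        ((tendsto_rpow_neg_atTop hr0).comp hjtop).const_mul (c j)
      rw [mul_zero] at h2
      exact (h1.atTop_add (h2.neg)).const_mul_atTop hApos
    apply tendsto_atTop_mono' atTop _ hlb
    filter_upwards [hjtop.eventually_ge_atTop (max (max pbar 1) (c j) + 1)] with n hn
    set q := pseq n j with hq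
    have hq1 : (1:ℝ) ≤ q := by
      have := le_max_right pbar 1
      have := le_max_left (max pbar 1) (c j)
      linarith
    have hq0 : 0 < q := by linarith
    have hqpbar : pbar < q := by
      have := le_max_left pbar 1
      have := le_max_left (max pbar 1) (c j)
      linarith
    have hqc : c j ≤ q := by
      have := le_max_right (max pbar 1) (c j)
      linarith
    have hwb : Real.exp (-r * Real.log q + κ + v j) ≤ Real.exp (w j q + v j) := by
      apply Real.exp_le_exp.mpr
      have := hbound q hqpbar
      linarith
    have hexp : Real.exp (-r * Real.log q + κ + v j) = q ^ (-r) * Real.exp (κ + v j) := by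
      rw [Real.rpow_def_of_pos hq0, ← Real.exp_add]
      ring_nf
    have hstep : A * (q ^ (-r) * (q - c j)) ≤ P (pseq n) j * (q - c j) := by
      have hsub : 0 ≤ q - c j := by linarith
      have h1 : Real.exp (-r * Real.log q + κ + v j) / D ≤ P (pseq n) j := by
        refine le_trans ?_ (hPj n)
        exact div_le_div_of_nonneg_right hwb hDpos.le
      have h2 : A * (q ^ (-r)) ≤ P (pseq n) j := by
        rw [hA]
        calc Real.exp (κ + v j) / D * q ^ (-r)
            = Real.exp (-r * Real.log q + κ + v j) / D := by rw [hexp]; ring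
          _ ≤ P (pseq n) j := h1
      calc A * (q ^ (-r) * (q - c j)) = (A * q ^ (-r)) * (q - c j) := by ring
        _ ≤ P (pseq n) j * (q - c j) := mul_le_mul_of_nonneg_right h2 hsub
    have hid : q ^ (-r) * (q - c j) = q ^ (1 - r) - c j * q ^ (-r) := by
      have : q ^ (-r) * q = q ^ (1 - r) := by
        nth_rewrite 2 [← Real.rpow_one q]
        rw [← Real.rpow_add hq0, neg_add_eq_sub]
      nlinarith [this]
    calc A * (q ^ (1 - r) - c j * q ^ (-r)) = A * (q ^ (-r) * (q - c j)) := by rw [hid]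
      _ ≤ P (pseq n) j * (q - c j) := hstep
  -- other terms bounded below eventually
  have hothers : ∀ i : Fin J, ∃ B : ℝ, ∀ᶠ n in atTop,
      -B ≤ P (pseq n) i * (pseq n i - c i) := by
    intro i
    by_cases hij : i = j
    · refine ⟨0, ?_⟩
      subst hij
      filter_upwards [hjtop.eventually_ge_atTop (c i)] with n hn
      simpa using mul_nonneg (hP0 n i) (by linarith)
    · rcases hother i hij with ⟨L, hL⟩ | htop
      · refine ⟨|L - c i| + 1, ?_⟩
        have h1 : ∀ᶠ n in atTop, |pseq n i - L| < 1 := by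
          have := Metric.tendsto_atTop.mp hL 1 one_pos
          obtain ⟨N, hN⟩ := this
          filter_upwards [eventually_ge_atTop N] with n hn
          simpa [Real.dist_eq] using hN n hn
        filter_upwards [h1] with n hn
        have habs : |pseq n i - c i| ≤ |L - c i| + 1 := by
          calc |pseq n i - c i| = |(pseq n i - L) + (L - c i)| := by ring_nf
            _ ≤ |pseq n i - L| + |L - c i| := abs_add_le _ _
            _ ≤ |L - c i| + 1 := by linarith
        have : |P (pseq n) i * (pseq n i - c i)| ≤ |L - c i| + 1 := by
          rw [abs_mul]
          calc |P (pseq n) i| * |pseq n i - c i| ≤ 1 * |pseq n i - c i| := by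
                apply mul_le_mul_of_nonneg_right _ (abs_nonneg _)
                rw [abs_of_nonneg (hP0 n i)]; exact hP1 n i
            _ = |pseq n i - c i| := one_mul _
            _ ≤ |L - c i| + 1 := habs
        linarith [neg_abs_le (P (pseq n) i * (pseq n i - c i))]
      · refine ⟨0, ?_⟩
        filter_upwards [htop.eventually_ge_atTop (c i)] with n hn
        simpa using mul_nonneg (hP0 n i) (by linarith)
  choose B hB using hothers
  set Btot : ℝ := ∑ i ∈ Jf.erase j, B i with hBtot
  have hev : ∀ᶠ n in atTop,
      P (pseq n) j * (pseq n j - c j) - Btot ≤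
        ∑ i ∈ Jf, P (pseq n) i * (pseq n i - c i) := by
    have hall : ∀ᶠ n in atTop, ∀ i ∈ Jf.erase j, -B i ≤ P (pseq n) i * (pseq n i - c i) :=
      (Filter.eventually_all_finset _).mpr fun i _ => hB i
    filter_upwards [hall] with n hn
    have hsum : -Btot ≤ ∑ i ∈ Jf.erase j, P (pseq n) i * (pseq n i - c i) := by
      rw [hBtot, ← Finset.sum_neg_distrib]
      exact Finset.sum_le_sum hn
    have hsplit : P (pseq n) j * (pseq n j - c j) +
        ∑ i ∈ Jf.erase j, P (pseq n) i * (pseq n i - c i) =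
        ∑ i ∈ Jf, P (pseq n) i * (pseq n i - c i) :=
      Finset.add_sum_erase Jf (fun i => P (pseq n) i * (pseq n i - c i)) hj
    linarith
  exact tendsto_atTop_mono' atTop hev (tendsto_atTop_add_const_right atTop (-Btot) key)
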